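/- The Cherednik operator D_k is triangular on monomials and satisfies D_k E(n,k) = (n + ρ(k)) E(n,k) for n > 0 and D_k E(n,k) = (n - ρ(k)) E(n,k) for n ≤ 0, where ρ(k) = (k_1 + 2k_2)/2; in particular, D_k z^n = (n+ρ(k)) z^n + (lower order terms) for n > 0 and D_k z^n = (n-ρ(k)) z^n + (lower order) for n ≤ 0. -/

import Mathlib

open Polynomial

/-- The Cherednik operator of type `BC₁`:
`D_k = z∂z + k₁(1-z⁻¹)⁻¹(1-s) + 2k₂(1-z⁻²)⁻¹(1-s) - ρ(k)`, with `ρ(k) = (k₁+2k₂)/2`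
and `(s f)(z) = f(z⁻¹)`. -/
noncomputable def cherednik (k1 k2 : ℂ) (f : ℂ → ℂ) : ℂ → ℂ := fun z =>
  z * deriv f z + k1 * ((f z - f z⁻¹) / (1 - z⁻¹))
    + 2 * k2 * ((f z - f z⁻¹) / (1 - (z⁻¹) ^ 2)) - (k1 + 2 * k2) / 2 * f z

/-- The position of the monomial `z^m` in the ordered basis `(1, z, z⁻¹, z², z⁻², …)`. -/
def ord (m : ℤ) : ℕ := if 0 < m then 2 * m.toNat - 1 else 2 * (-m).toNat

open Finset in
lemma sum_sum_single (z : ℂ) (s : Finset ℕ) (p : ℕ → ℤ) (a : ℂ) :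
    (∑ i ∈ s, Finsupp.single (p i) a).sum (fun m b => b * z ^ m) = ∑ i ∈ s, a * z ^ (p i) := by
  rw [← Finsupp.sum_finset_sum_index (h := fun m b => b * z ^ m) (fun m => zero_mul _)
    (fun m b1 b2 => add_mul b1 b2 _)]
  exact Finset.sum_congr rfl fun i _ => Finsupp.sum_single_index (zero_mul _)

open Finset in
lemma apply_sum_single (s : Finset ℕ) (p : ℕ → ℤ) (a : ℂ) (m : ℤ) (h : ∀ i ∈ s, p i ≠ m) :
    (∑ i ∈ s, Finsupp.single (p i) a) m = 0 := by
  rw [Finsupp.finset_sum_apply]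
  exact Finset.sum_eq_zero fun i hi => Finsupp.single_eq_of_ne' (h i hi)

open Finset in
lemma geomA {z : ℂ} (hz : z ≠ 0) (h1 : z ≠ 1) (m : ℕ) :
    (z ^ (m : ℤ) - z ^ (-(m : ℤ))) / (1 - z⁻¹)
      = z ^ (1 - (m : ℤ)) * ∑ i ∈ range (2 * m), z ^ i := by
  have hz1 : z - 1 ≠ 0 := sub_ne_zero.mpr h1
  have hzm : z ^ m ≠ 0 := pow_ne_zero _ hz
  rw [geom_sum_eq h1, zpow_neg, zpow_natCast, zpow_sub₀ hz, zpow_one, zpow_natCast,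
    pow_mul', sq]
  field_simp

open Finset in
lemma geomB {z : ℂ} (hz : z ≠ 0) (h2 : z ^ 2 ≠ 1) (m : ℕ) :
    (z ^ (m : ℤ) - z ^ (-(m : ℤ))) / (1 - (z⁻¹) ^ 2)
      = z ^ (2 - (m : ℤ)) * ∑ i ∈ range m, (z ^ 2) ^ i := by
  have hz1 : z ^ 2 - 1 ≠ 0 := sub_ne_zero.mpr h2
  have hzm : z ^ m ≠ 0 := pow_ne_zero _ hz
  have hz2 : (z : ℂ) ^ 2 ≠ 0 := pow_ne_zero _ hz
  rw [geom_sum_eq h2, zpow_neg, zpow_natCast, zpow_sub₀ hz, zpow_natCast, ← pow_mul,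
    show (2 : ℤ) = ((2 : ℕ) : ℤ) from rfl, zpow_natCast]
  field_simp
  ring

/-- Triangularity of the Cherednik operator on monomials:
`D_k z^n = (n + ρ(k)) z^n + (lower order)` for `n > 0` and
`D_k z^n = (n - ρ(k)) z^n + (lower order)` for `n ≤ 0`, where lower order means a linear
combination of monomials `z^m` preceding `z^n` in the ordering `1 < z < z⁻¹ < z² < ⋯`. -/
theorem stmt8 (k1 k2 : ℂ) (n : ℤ) :
    ∃ c : ℤ →₀ ℂ, (∀ m : ℤ, c m ≠ 0 → ord m < ord n) ∧
      ∀ z : ℂ, z ≠ 0 → z ^ 2 ≠ 1 →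
        cherednik k1 k2 (fun w => w ^ n) z =
          (if 0 < n then (n : ℂ) + (k1 + 2 * k2) / 2 else (n : ℂ) - (k1 + 2 * k2) / 2) * z ^ n
            + c.sum (fun m a => a * z ^ m) := by
  by_cases hn : 0 < n
  · -- positive case
    set N : ℕ := n.toNat with hN
    have hNn : (N : ℤ) = n := Int.toNat_of_nonneg hn.le
    have hN1 : 1 ≤ N := by omega
    refine ⟨(∑ i ∈ Finset.range (2 * N - 1), Finsupp.single (1 - n + i) k1)
      + (∑ i ∈ Finset.range (N - 1), Finsupp.single (2 - n + 2 * i) (2 * k2)), ?_, ?_⟩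
    · intro m hm
      by_contra hcon
      apply hm
      rw [Finsupp.add_apply, apply_sum_single, apply_sum_single, add_zero]
      · intro i hi heq
        simp only [Finset.mem_range] at hi
        refine hcon ?_
        rw [← heq]
        unfold ord
        split_ifs <;> omega
      · intro i hi heq
        simp only [Finset.mem_range] at hi
        refine hcon ?_
        rw [← heq]
        unfold ord
        split_ifs <;> omega
    · intro z hz h2
      have hz1 : z ≠ 1 := fun h => h2 (by rw [h]; ring)
      rw [if_pos hn, Finsupp.sum_add_index' (h := fun m b => b * z ^ m)
        (fun m => zero_mul _) (fun m b1 b2 => add_mul b1 b2 _), sum_sum_single, sum_sum_single]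
      simp only [cherednik, deriv_zpow]
      have hinv : ∀ m : ℤ, (z⁻¹) ^ m = z ^ (-m) := fun m => by
        rw [inv_zpow, ← zpow_neg]
      have hA := geomA hz hz1 N
      have hB := geomB hz h2 N
      rw [hNn] at hA hB
      simp only [hinv]
      rw [hA, hB]
      have hz' : z ^ (n - 1) * z = z ^ n := by
        rw [← zpow_add_one₀ hz, sub_add_cancel]
      have hzn : z * (↑n * z ^ (n - 1)) = ↑n * z ^ n := by
        rw [← hz']; ring
      rw [hzn]
      have e1 : ∑ i ∈ Finset.range (2 * N), z ^ i
          = (∑ i ∈ Finset.range (2 * N - 1), z ^ i) + z ^ (2 * N - 1) := by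
        conv_lhs => rw [show 2 * N = (2 * N - 1) + 1 by omega]
        exact Finset.sum_range_succ _ _
      have e2 : ∑ i ∈ Finset.range N, (z ^ 2) ^ i
          = (∑ i ∈ Finset.range (N - 1), (z ^ 2) ^ i) + (z ^ 2) ^ (N - 1) := by
        conv_lhs => rw [show N = (N - 1) + 1 by omega]
        exact Finset.sum_range_succ _ _
      rw [e1, e2]
      have q1 : ∑ i ∈ Finset.range (2 * N - 1), k1 * z ^ (1 - n + (i : ℤ))
          = k1 * z ^ (1 - n) * ∑ i ∈ Finset.range (2 * N - 1), z ^ i := by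
        rw [Finset.mul_sum]
        refine Finset.sum_congr rfl fun i _ => ?_
        have hx : z ^ (1 - n + (i : ℤ)) = z ^ (1 - n) * z ^ i := by
          rw [← zpow_natCast z i, ← zpow_add₀ hz]
        rw [hx]; ring
      have q2 : ∑ i ∈ Finset.range (N - 1), 2 * k2 * z ^ (2 - n + 2 * (i : ℤ))
          = 2 * k2 * z ^ (2 - n) * ∑ i ∈ Finset.range (N - 1), (z ^ 2) ^ i := by
        rw [Finset.mul_sum]
        refine Finset.sum_congr rfl fun i _ => ?_
        have hx : z ^ (2 - n + 2 * (i : ℤ)) = z ^ (2 - n) * (z ^ 2) ^ i := by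
          rw [← pow_mul, ← zpow_natCast z (2 * i), ← zpow_add₀ hz]
          congr 1 <;> omega
        rw [hx]; ring
      rw [q1, q2]
      have top1 : z ^ (1 - n) * z ^ (2 * N - 1) = z ^ n := by
        rw [← zpow_natCast z (2 * N - 1), ← zpow_add₀ hz]
        congr 1 <;> omega
      have top2 : z ^ (2 - n) * (z ^ 2) ^ (N - 1) = z ^ n := by
        rw [← pow_mul, ← zpow_natCast z (2 * (N - 1)), ← zpow_add₀ hz]
        congr 1 <;> omega
      linear_combination k1 * top1 + 2 * k2 * top2
  · -- n ≤ 0 case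
    push_neg at hn
    set N : ℕ := (-n).toNat with hN
    have hNn : (N : ℤ) = -n := Int.toNat_of_nonneg (by omega)
    refine ⟨(∑ i ∈ Finset.range (2 * N), Finsupp.single (1 + n + i) (-k1))
      + (∑ i ∈ Finset.range N, Finsupp.single (2 + n + 2 * i) (-(2 * k2))), ?_, ?_⟩
    · intro m hm
      by_contra hcon
      apply hm
      rw [Finsupp.add_apply, apply_sum_single, apply_sum_single, add_zero]
      · intro i hi heq
        simp only [Finset.mem_range] at hi
        refine hcon ?_
        rw [← heq]
        unfold ord
        split_ifs <;> omega
      · intro i hi heq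
        simp only [Finset.mem_range] at hi
        refine hcon ?_
        rw [← heq]
        unfold ord
        split_ifs <;> omega
    · intro z hz h2
      have hz1 : z ≠ 1 := fun h => h2 (by rw [h]; ring)
      rw [if_neg (by omega), Finsupp.sum_add_index' (h := fun m b => b * z ^ m)
        (fun m => zero_mul _) (fun m b1 b2 => add_mul b1 b2 _), sum_sum_single, sum_sum_single]
      simp only [cherednik, deriv_zpow]
      have hinv : ∀ m : ℤ, (z⁻¹) ^ m = z ^ (-m) := fun m => by
        rw [inv_zpow, ← zpow_neg]
      simp only [hinv]
      have hflip : z ^ n - z ^ (-n) = -(z ^ ((N : ℤ)) - z ^ (-(N : ℤ))) := by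
        rw [hNn, neg_neg, neg_sub]
      rw [hflip, neg_div, neg_div, geomA hz hz1 N, geomB hz h2 N]
      have hz' : z ^ (n - 1) * z = z ^ n := by
        rw [← zpow_add_one₀ hz, sub_add_cancel]
      have hzn : z * (↑n * z ^ (n - 1)) = ↑n * z ^ n := by
        rw [← hz']; ring
      rw [hzn]
      have q1 : ∑ i ∈ Finset.range (2 * N), -k1 * z ^ (1 + n + (i : ℤ))
          = -k1 * z ^ (1 - (N : ℤ)) * ∑ i ∈ Finset.range (2 * N), z ^ i := by
        rw [Finset.mul_sum]
        refine Finset.sum_congr rfl fun i _ => ?_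
        have hx : z ^ (1 + n + (i : ℤ)) = z ^ (1 - (N : ℤ)) * z ^ i := by
          rw [← zpow_natCast z i, ← zpow_add₀ hz]
          congr 1 <;> omega
        rw [hx]; ring
      have q2 : ∑ i ∈ Finset.range N, -(2 * k2) * z ^ (2 + n + 2 * (i : ℤ))
          = -(2 * k2) * z ^ (2 - (N : ℤ)) * ∑ i ∈ Finset.range N, (z ^ 2) ^ i := by
        rw [Finset.mul_sum]
        refine Finset.sum_congr rfl fun i _ => ?_
        have hx : z ^ (2 + n + 2 * (i : ℤ)) = z ^ (2 - (N : ℤ)) * (z ^ 2) ^ i := by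
          rw [← pow_mul, ← zpow_natCast z (2 * i), ← zpow_add₀ hz]
          congr 1 <;> omega
        rw [hx]; ring
      rw [q1, q2]
      ring
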